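/- arXiv:1209.1424 — 2 statements merged into one kernel-verified Lean document; each statement's English description precedes it below -/
import Mathlib

section
/- Let $F_g$ be a CDF with $F_g(x)\sim \eta x^{\gamma}$ as $x\downarrow 0$ ($\eta,\gamma>0$). Then for every $\epsilon_2\in(0,1)$ and for $\epsilon_1>0$ small enough, $\int_0^{\epsilon_1}(1-F_g(x))^N dx \le \frac{1}{\gamma}\int_0^{\epsilon_1^{\gamma}} x^{\frac{1}{\gamma}-1}e^{-N(1-\epsilon_2)\eta x}dx$, and by Watson's lemma, $\limsup_{N\to\infty}\frac{\int_0^{\epsilon_1}(1-F_g(x))^N dx}{F_g^{-1}(1/N)}\le \Gamma\left(1+\frac1{\gamma}\right)$. -/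
open MeasureTheory Filter Real Set Topology intervalIntegral

lemma watson_subst {γ : ℝ} (hγ : 0 < γ) {a : ℝ} (ha : 0 ≤ a) (b : ℝ) :
    (1 / γ) * ∫ u in (0:ℝ)..(a ^ γ), u ^ (1 / γ - 1) * Real.exp (-(b * u)) =
      ∫ x in (0:ℝ)..a, Real.exp (-(b * x ^ γ)) := by
  have hγ' : γ ≠ 0 := hγ.ne'
  have haγ : (0:ℝ) ≤ a ^ γ := Real.rpow_nonneg ha γ
  set f : ℝ → ℝ := fun u => u ^ (1/γ) with hf_def
  set f' : ℝ → ℝ := fun u => (1/γ) * u ^ (1/γ - 1) with hf'_def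
  set g : ℝ → ℝ := fun x => Real.exp (-(b * x ^ γ)) with hg_def
  have hgcont : Continuous g := by
    apply Real.continuous_exp.comp
    apply Continuous.neg
    apply Continuous.mul continuous_const
    rw [continuous_iff_continuousAt]
    intro x
    rcases eq_or_ne x 0 with rfl | hx
    · exact Real.continuousAt_rpow_const 0 γ (Or.inr hγ.le)
    · exact Real.continuousAt_rpow_const x γ (Or.inl hx)
  have hfcont : ContinuousOn f (Set.uIcc 0 (a ^ γ)) := fun u _ =>
    (Real.continuousAt_rpow_const u (1/γ) (Or.inr (by positivity))).continuousWithinAt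
  have hkey : ∀ u : ℝ, 0 ≤ u → f u ^ γ = u := by
    intro u hu
    rw [hf_def, ← Real.rpow_mul hu, one_div_mul_cancel hγ', Real.rpow_one]
  have huIcc : Set.uIcc (0:ℝ) (a ^ γ) = Set.Icc 0 (a ^ γ) := Set.uIcc_of_le haγ
  have hderiv : ∀ u ∈ Set.Ioo (min (0:ℝ) (a ^ γ)) (max 0 (a ^ γ)),
      HasDerivWithinAt f (f' u) (Set.Ioi u) u := by
    intro u hu
    rw [min_eq_left haγ, max_eq_right haγ] at hu
    exact (Real.hasDerivAt_rpow_const (Or.inl hu.1.ne')).hasDerivWithinAt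
  have heq : (fun u => (g ∘ f) u * f' u)
      = fun u => u ^ (1/γ - 1) * ((1/γ) * (g ∘ f) u) := by
    funext u; simp only [Function.comp, hf'_def]; ring
  have hint : IntervalIntegrable (fun u => (g ∘ f) u * f' u) volume 0 (a ^ γ) := by
    rw [heq]
    exact (intervalIntegrable_rpow'
        (by linarith [one_div_pos.mpr hγ])).mul_continuousOn
      (continuousOn_const.mul (hgcont.comp_continuousOn hfcont))
  have himage : IsCompact (f '' Set.uIcc 0 (a ^ γ)) :=
    isCompact_uIcc.image_of_continuousOn hfcont
  have hcov := integral_comp_mul_deriv''' (f := f) (f' := f') (g := g) hfcont hderiv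
    (hgcont.continuousOn) (hgcont.continuousOn.integrableOn_compact himage)
    ((intervalIntegrable_iff' (f := fun u => (g ∘ f) u * f' u)).mp hint)
  have hf0 : f 0 = 0 := by
    rw [hf_def]; exact Real.zero_rpow (by positivity)
  have hfa : f (a ^ γ) = a := by
    show (a ^ γ) ^ (1/γ) = a
    rw [← Real.rpow_mul ha, mul_one_div_cancel hγ', Real.rpow_one]
  rw [hf0, hfa] at hcov
  rw [← hcov, ← intervalIntegral.integral_const_mul]
  apply intervalIntegral.integral_congr
  intro u hu
  rw [huIcc] at hu
  have h1 : g (f u) = Real.exp (-(b * u)) := by rw [hg_def]; simp only; rw [hkey u hu.1]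
  simp only [Function.comp, hf'_def, h1]
  ring

lemma watson_exp_bound {F : ℝ → ℝ} (hFmono : Monotone F) (hFle1 : ∀ x, F x ≤ 1)
    {a c γ : ℝ} (ha : 0 < a) (hγ : 0 < γ) (hc : 0 ≤ c)
    (hreg : ∀ x ∈ Set.Ioc (0:ℝ) a, c * x ^ γ ≤ F x) (N : ℕ) :
    (∫ x in (0:ℝ)..a, (1 - F x) ^ N) ≤ ∫ x in (0:ℝ)..a, Real.exp (-((N:ℝ) * c * x ^ γ)) := by
  have hAnti : Antitone (fun x => (1 - F x) ^ N) := by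
    intro x y hxy
    exact pow_le_pow_left₀ (by linarith [hFle1 y]) (by linarith [hFmono hxy]) N
  have hcontexp : ContinuousOn (fun x : ℝ => Real.exp (-((N:ℝ) * c * x ^ γ))) (Set.Icc 0 a) := by
    apply Real.continuous_exp.comp_continuousOn
    apply ContinuousOn.neg
    apply ContinuousOn.mul continuousOn_const
    intro x _
    rcases eq_or_ne x 0 with rfl | hx
    · exact (Real.continuousAt_rpow_const 0 γ (Or.inr hγ.le)).continuousWithinAt
    · exact (Real.continuousAt_rpow_const x γ (Or.inl hx)).continuousWithinAt
  rw [intervalIntegral.integral_of_le ha.le, intervalIntegral.integral_of_le ha.le]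
  apply setIntegral_mono_on
  · exact (hAnti.intervalIntegrable (a := 0) (b := a)).1
  · exact (hcontexp.integrableOn_compact isCompact_Icc).mono_set Set.Ioc_subset_Icc_self
  · exact measurableSet_Ioc
  · intro x hx
    have hFx0 : 0 ≤ F x :=
      le_trans (mul_nonneg hc (Real.rpow_nonneg hx.1.le γ)) (hreg x hx)
    have h1 : (1 - F x) ^ N ≤ Real.exp (-(F x)) ^ N :=
      pow_le_pow_left₀ (by linarith [hFle1 x]) (by linarith [Real.add_one_le_exp (-(F x))]) N
    refine h1.trans ?_
    rw [← Real.exp_nat_mul]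
    apply Real.exp_le_exp.mpr
    have h2 := hreg x hx
    have hN : (0:ℝ) ≤ (N:ℝ) := Nat.cast_nonneg N
    nlinarith

lemma watson_region {F : ℝ → ℝ} {η γ : ℝ} (hη : 0 < η) (hγ : 0 < γ)
    (horigin : Tendsto (fun x => F x / (η * x ^ γ)) (𝓝[>] 0) (𝓝 1))
    {δ : ℝ} (hδ : 0 < δ) :
    ∃ a > (0:ℝ), ∀ x ∈ Set.Ioc (0:ℝ) a,
      (1 - δ) * η * x ^ γ ≤ F x ∧ F x ≤ (1 + δ) * η * x ^ γ := by
  have h1 : Set.Ioo (1 - δ) (1 + δ) ∈ 𝓝 (1:ℝ) := Ioo_mem_nhds (by linarith) (by linarith)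
  have h2 := horigin h1
  rw [Filter.mem_map, mem_nhdsGT_iff_exists_Ioc_subset] at h2
  obtain ⟨u, hu, hsub⟩ := h2
  refine ⟨u, hu, fun x hx => ?_⟩
  have hmem := hsub hx
  simp only [Set.mem_preimage, Set.mem_Ioo] at hmem
  have hpos : 0 < η * x ^ γ := by
    have := Real.rpow_pos_of_pos hx.1 γ
    positivity
  constructor
  · have h := (lt_div_iff₀ hpos).mp hmem.1
    rw [mul_assoc]; linarith
  · have h := (div_lt_iff₀ hpos).mp hmem.2
    rw [mul_assoc]; linarith

lemma watson_tail {b γ : ℝ} (hb : 0 < b) (hγ : 0 < γ) {a : ℝ} (ha : 0 ≤ a) :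
    (1 / γ) * ∫ u in (0:ℝ)..(a ^ γ), u ^ (1 / γ - 1) * Real.exp (-(b * u)) ≤
      Real.Gamma (1 + 1 / γ) * (1 / b) ^ (1 / γ) := by
  have hγ0 : (0:ℝ) < 1/γ := by positivity
  have haγ : (0:ℝ) ≤ a ^ γ := Real.rpow_nonneg ha γ
  have hIoi : IntegrableOn (fun u : ℝ => u ^ (1/γ - 1) * Real.exp (-(b * u))) (Set.Ioi 0) := by
    have h := integrableOn_rpow_mul_exp_neg_mul_rpow (p := 1) (s := 1/γ - 1) (b := b)
      (by linarith) one_pos hb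
    apply h.congr_fun ?_ measurableSet_Ioi
    intro x _
    simp only [Real.rpow_one, neg_mul]
  have hval := Real.integral_rpow_mul_exp_neg_mul_Ioi hγ0 hb
  have hle : (∫ u in (0:ℝ)..(a ^ γ), u ^ (1/γ - 1) * Real.exp (-(b * u))) ≤
      ∫ u in Set.Ioi (0:ℝ), u ^ (1/γ - 1) * Real.exp (-(b * u)) := by
    rw [intervalIntegral.integral_of_le haγ]
    apply setIntegral_mono_set hIoi
    · filter_upwards [ae_restrict_mem measurableSet_Ioi] with x hx
      exact mul_nonneg (Real.rpow_nonneg (le_of_lt hx) _) (Real.exp_nonneg _)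
    · exact HasSubset.Subset.eventuallyLE Set.Ioc_subset_Ioi_self
  calc (1/γ) * ∫ u in (0:ℝ)..(a ^ γ), u ^ (1/γ - 1) * Real.exp (-(b * u))
      ≤ (1/γ) * ∫ u in Set.Ioi (0:ℝ), u ^ (1/γ - 1) * Real.exp (-(b * u)) :=
        mul_le_mul_of_nonneg_left hle hγ0.le
    _ = Real.Gamma (1 + 1/γ) * (1/b) ^ (1/γ) := by
        rw [hval, add_comm, Real.Gamma_add_one (ne_of_gt hγ0)]; ring

/-- Watson-type bound near the origin: for a CDF `F` with `F(x) ~ η x^γ` as `x ↓ 0`,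
for every `ε₂ ∈ (0,1)` and all `ε₁` small enough,
`∫₀^{ε₁} (1-F(x))^N dx ≤ (1/γ) ∫₀^{ε₁^γ} x^{1/γ-1} e^{-N(1-ε₂)ηx} dx`, and
`limsup_N (∫₀^{ε₁} (1-F(x))^N dx) / F⁻¹(1/N) ≤ Γ(1 + 1/γ)`. -/
theorem integral_min_tail_watson_bound
    (F : ℝ → ℝ) (hFmono : Monotone F) (hFle1 : ∀ x, F x ≤ 1)
    (η γ : ℝ) (hη : 0 < η) (hγ : 0 < γ)
    (horigin : Tendsto (fun x => F x / (η * x ^ γ)) (𝓝[>] 0) (𝓝 1))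
    (Finv : ℝ → ℝ)
    (hFinv : ∀ y ∈ Set.Ioo (0 : ℝ) 1, 0 < Finv y ∧ F (Finv y) = y) :
    ∀ ε₂ ∈ Set.Ioo (0 : ℝ) 1, ∃ ε₁bar > (0 : ℝ), ∀ ε₁ ∈ Set.Ioc (0 : ℝ) ε₁bar,
      (∀ N : ℕ,
        (∫ x in (0 : ℝ)..ε₁, (1 - F x) ^ N) ≤
          (1 / γ) * ∫ x in (0 : ℝ)..(ε₁ ^ γ),
            x ^ (1 / γ - 1) * Real.exp (-((N : ℝ) * (1 - ε₂) * η * x))) ∧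
      Filter.limsup
          (fun N : ℕ => (∫ x in (0 : ℝ)..ε₁, (1 - F x) ^ N) / Finv (1 / N)) atTop ≤
        Real.Gamma (1 + 1 / γ) := by
  intro ε₂ hε₂
  obtain ⟨a₀, ha₀, hreg₀⟩ := watson_region hη hγ horigin hε₂.1
  refine ⟨a₀, ha₀, ?_⟩
  intro ε₁ hε₁
  have hε₁0 : 0 < ε₁ := hε₁.1
  have part1 : ∀ N : ℕ, (∫ x in (0:ℝ)..ε₁, (1 - F x) ^ N) ≤
      (1/γ) * ∫ x in (0:ℝ)..(ε₁ ^ γ),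
        x ^ (1/γ - 1) * Real.exp (-((N:ℝ) * (1 - ε₂) * η * x)) := by
    intro N
    have hreg : ∀ x ∈ Set.Ioc (0:ℝ) ε₁, ((1 - ε₂) * η) * x ^ γ ≤ F x := by
      intro x hx
      have h := (hreg₀ x ⟨hx.1, hx.2.trans hε₁.2⟩).1
      linarith [h, le_of_eq (mul_assoc (1 - ε₂) η (x ^ γ))]
    have hc : (0:ℝ) ≤ (1 - ε₂) * η := by nlinarith [hε₂.2, hη]
    calc (∫ x in (0:ℝ)..ε₁, (1 - F x) ^ N)
        ≤ ∫ x in (0:ℝ)..ε₁, Real.exp (-((N:ℝ) * ((1 - ε₂) * η) * x ^ γ)) :=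
          watson_exp_bound hFmono hFle1 hε₁0 hγ hc hreg N
      _ = ∫ x in (0:ℝ)..ε₁, Real.exp (-((N:ℝ) * (1 - ε₂) * η * x ^ γ)) := by
          apply intervalIntegral.integral_congr
          intro x _
          ring_nf
      _ = (1/γ) * ∫ x in (0:ℝ)..(ε₁ ^ γ),
            x ^ (1/γ - 1) * Real.exp (-((N:ℝ) * (1 - ε₂) * η * x)) :=
          (watson_subst hγ hε₁0.le _).symm
  refine ⟨part1, ?_⟩
  have hInn : ∀ N : ℕ, 0 ≤ ∫ x in (0:ℝ)..ε₁, (1 - F x) ^ N := fun N =>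
    intervalIntegral.integral_nonneg hε₁0.le (fun x _ => pow_nonneg (by linarith [hFle1 x]) N)
  set S : ℕ → ℝ := fun N => (∫ x in (0:ℝ)..ε₁, (1 - F x) ^ N) / Finv (1 / (N:ℝ)) with hS_def
  have hΓpos : 0 < Real.Gamma (1 + 1/γ) := Real.Gamma_pos_of_pos (by positivity)
  have hS0 : ∀ᶠ N : ℕ in atTop, 0 ≤ S N := by
    filter_upwards [eventually_ge_atTop 2] with N hN2
    have hN1 : (1:ℝ) < (N:ℝ) := by exact_mod_cast hN2.trans_lt' one_lt_two
    have hy : (1:ℝ)/(N:ℝ) ∈ Set.Ioo (0:ℝ) 1 :=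
      ⟨by positivity, by rw [div_lt_one (by linarith)]; linarith⟩
    exact div_nonneg (hInn N) (hFinv _ hy).1.le
  have key : ∀ δ ∈ Set.Ioo (0:ℝ) 1, limsup S atTop ≤
      Real.Gamma (1 + 1/γ) * ((1+δ)/(1-δ)) ^ (1/γ) := by
    intro δ hδ
    obtain ⟨a₁, ha₁, hreg₁⟩ := watson_region hη hγ horigin hδ.1
    set xδ := min a₁ ε₁ with hxδ_def
    have hxδ0 : 0 < xδ := lt_min ha₁ hε₁0
    have hxδε₁ : xδ ≤ ε₁ := min_le_right _ _
    have hregδ : ∀ x ∈ Set.Ioc (0:ℝ) xδ,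
        (1-δ)*η*x^γ ≤ F x ∧ F x ≤ (1+δ)*η*x^γ :=
      fun x hx => hreg₁ x ⟨hx.1, hx.2.trans (min_le_left _ _)⟩
    have hδ1 : 0 < 1 - δ := by linarith [hδ.2]
    have hFxδpos : 0 < F xδ := by
      refine lt_of_lt_of_le ?_ (hregδ xδ ⟨hxδ0, le_refl _⟩).1
      have := Real.rpow_pos_of_pos hxδ0 γ
      positivity
    set q := 1 - F xδ with hq_def
    have hq0 : 0 ≤ q := by simp only [hq_def]; linarith [hFle1 xδ]
    have hq1 : q < 1 := by simp only [hq_def]; linarith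
    -- Bound A
    have boundA : ∀ N : ℕ, 1 ≤ N → (∫ x in (0:ℝ)..ε₁, (1 - F x) ^ N) ≤
        Real.Gamma (1 + 1/γ) * (1/((N:ℝ)*(1-δ)*η)) ^ (1/γ) + ε₁ * q ^ N := by
      intro N hN
      have hNpos : (0:ℝ) < (N:ℝ) := by exact_mod_cast hN
      have hAnti : Antitone (fun x => (1 - F x) ^ N) := by
        intro x y hxy
        exact pow_le_pow_left₀ (by linarith [hFle1 y]) (by linarith [hFmono hxy]) N
      have hsplit : (∫ x in (0:ℝ)..ε₁, (1 - F x) ^ N) =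
          (∫ x in (0:ℝ)..xδ, (1 - F x) ^ N) + ∫ x in xδ..ε₁, (1 - F x) ^ N :=
        (intervalIntegral.integral_add_adjacent_intervals
          hAnti.intervalIntegrable hAnti.intervalIntegrable).symm
      have hb : 0 < (N:ℝ)*(1-δ)*η := by positivity
      have hregδ' : ∀ x ∈ Set.Ioc (0:ℝ) xδ, ((1-δ)*η) * x ^ γ ≤ F x := by
        intro x hx
        have h := (hregδ x hx).1
        linarith [le_of_eq (mul_assoc (1-δ) η (x ^ γ))]
      have h1 : (∫ x in (0:ℝ)..xδ, (1 - F x) ^ N) ≤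
          Real.Gamma (1 + 1/γ) * (1/((N:ℝ)*(1-δ)*η)) ^ (1/γ) := by
        calc (∫ x in (0:ℝ)..xδ, (1 - F x) ^ N)
            ≤ ∫ x in (0:ℝ)..xδ, Real.exp (-((N:ℝ) * ((1-δ)*η) * x ^ γ)) :=
              watson_exp_bound hFmono hFle1 hxδ0 hγ (by positivity) hregδ' N
          _ = ∫ x in (0:ℝ)..xδ, Real.exp (-((N:ℝ)*(1-δ)*η * x ^ γ)) := by
              apply intervalIntegral.integral_congr
              intro x _
              ring_nf
          _ = (1/γ) * ∫ u in (0:ℝ)..(xδ ^ γ),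
                u ^ (1/γ - 1) * Real.exp (-((N:ℝ)*(1-δ)*η * u)) :=
              (watson_subst hγ hxδ0.le _).symm
          _ ≤ _ := watson_tail hb hγ hxδ0.le
      have h2 : (∫ x in xδ..ε₁, (1 - F x) ^ N) ≤ ε₁ * q ^ N := by
        have hmono : (∫ x in xδ..ε₁, (1 - F x) ^ N) ≤ ∫ _x in xδ..ε₁, q ^ N := by
          apply intervalIntegral.integral_mono_on hxδε₁ hAnti.intervalIntegrable
            intervalIntegrable_const
          intro x hx
          exact hAnti hx.1
        rw [intervalIntegral.integral_const, smul_eq_mul] at hmono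
        nlinarith [pow_nonneg hq0 N, hxδ0]
      linarith
    -- Bound B
    have boundB : ∀ᶠ N : ℕ in atTop,
        ((N:ℝ)*(1+δ)*η) ^ (-(1/γ)) ≤ Finv (1/(N:ℝ)) ∧ 0 < Finv (1/(N:ℝ)) ∧ 1 ≤ N := by
      filter_upwards [eventually_ge_atTop 2,
        tendsto_one_div_atTop_nhds_zero_nat.eventually_lt_const hFxδpos] with N hN2 hNlt
      have hN1 : (1:ℝ) < (N:ℝ) := by exact_mod_cast hN2.trans_lt' one_lt_two
      have hNpos : (0:ℝ) < (N:ℝ) := by linarith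
      have hy : (1:ℝ)/(N:ℝ) ∈ Set.Ioo (0:ℝ) 1 :=
        ⟨by positivity, by rw [div_lt_one (by linarith)]; linarith⟩
      obtain ⟨hFipos, hFeq⟩ := hFinv _ hy
      refine ⟨?_, hFipos, by omega⟩
      have hle : Finv (1/(N:ℝ)) ≤ xδ := by
        by_contra h
        push_neg at h
        have h3 := hFmono h.le
        rw [hFeq] at h3
        linarith
      have h4 := (hregδ _ ⟨hFipos, hle⟩).2
      rw [hFeq] at h4
      have hxP : (0:ℝ) < (N:ℝ)*(1+δ)*η := mul_pos (mul_pos hNpos (by linarith [hδ.1])) hη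
      have hFγ : ((N:ℝ)*(1+δ)*η)⁻¹ ≤ Finv (1/(N:ℝ)) ^ γ := by
        rw [inv_eq_one_div, div_le_iff₀ hxP]
        have h5 := mul_le_mul_of_nonneg_left h4 hNpos.le
        rw [mul_one_div, div_self hNpos.ne'] at h5
        exact le_of_le_of_eq h5 (by ring)
      calc ((N:ℝ)*(1+δ)*η) ^ (-(1/γ)) = (((N:ℝ)*(1+δ)*η)⁻¹) ^ (1/γ) := by
            rw [← Real.rpow_neg_one, ← Real.rpow_mul hxP.le]
            norm_num
        _ ≤ (Finv (1/(N:ℝ)) ^ γ) ^ (1/γ) :=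
            Real.rpow_le_rpow (inv_nonneg.mpr hxP.le) hFγ (by positivity)
        _ = Finv (1/(N:ℝ)) := by
            rw [← Real.rpow_mul hFipos.le, mul_one_div_cancel hγ.ne', Real.rpow_one]
    set K := ((1+δ)/(1-δ)) ^ ((1:ℝ)/γ) with hK_def
    set r : ℕ → ℝ := fun N => ε₁ * q ^ N * ((N:ℝ)*(1+δ)*η) ^ (1/γ) with hr_def
    have h1δ : (0:ℝ) < 1 + δ := by linarith [hδ.1]
    have hUB : ∀ᶠ N : ℕ in atTop, S N ≤ Real.Gamma (1 + 1/γ) * K + r N := by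
      filter_upwards [boundB] with N hB
      obtain ⟨hBle, hFipos, hN1⟩ := hB
      have hNpos : (0:ℝ) < (N:ℝ) := by exact_mod_cast hN1
      have hxP : (0:ℝ) < (N:ℝ)*(1+δ)*η := mul_pos (mul_pos hNpos h1δ) hη
      have hxM : (0:ℝ) < (N:ℝ)*(1-δ)*η := mul_pos (mul_pos hNpos hδ1) hη
      have hBpos : (0:ℝ) < ((N:ℝ)*(1+δ)*η) ^ (-(1/γ)) := Real.rpow_pos_of_pos hxP _
      have h3 : (1/((N:ℝ)*(1-δ)*η)) ^ ((1:ℝ)/γ) * ((N:ℝ)*(1+δ)*η) ^ ((1:ℝ)/γ) = K := by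
        rw [← Real.mul_rpow (one_div_nonneg.mpr hxM.le) hxP.le, hK_def]
        congr 1
        field_simp
      calc S N ≤ (∫ x in (0:ℝ)..ε₁, (1 - F x) ^ N) / ((N:ℝ)*(1+δ)*η) ^ (-(1/γ)) :=
            div_le_div_of_nonneg_left (hInn N) hBpos hBle
        _ = (∫ x in (0:ℝ)..ε₁, (1 - F x) ^ N) * ((N:ℝ)*(1+δ)*η) ^ ((1:ℝ)/γ) := by
            rw [Real.rpow_neg hxP.le, div_eq_mul_inv, inv_inv]
        _ ≤ (Real.Gamma (1 + 1/γ) * (1/((N:ℝ)*(1-δ)*η)) ^ (1/γ) + ε₁ * q ^ N) *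
              ((N:ℝ)*(1+δ)*η) ^ ((1:ℝ)/γ) :=
            mul_le_mul_of_nonneg_right (boundA N hN1) (Real.rpow_nonneg hxP.le _)
        _ = Real.Gamma (1 + 1/γ) *
              ((1/((N:ℝ)*(1-δ)*η)) ^ ((1:ℝ)/γ) * ((N:ℝ)*(1+δ)*η) ^ ((1:ℝ)/γ)) + r N := by
            rw [hr_def]; ring
        _ = Real.Gamma (1 + 1/γ) * K + r N := by rw [h3]
    have hrt : Tendsto r atTop (𝓝 0) := by
      have hk : ((1:ℝ)/γ) ≤ ((⌈(1/γ : ℝ)⌉₊ : ℕ) : ℝ) := Nat.le_ceil _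
      set k := ⌈(1/γ : ℝ)⌉₊ with hk_def
      have hPη : (0:ℝ) ≤ (1+δ)*η := by positivity
      apply squeeze_zero' (g := fun N : ℕ => (ε₁ * ((1+δ)*η) ^ ((1:ℝ)/γ)) * ((N:ℝ)^k * q^N))
      · apply Eventually.of_forall
        intro N
        have hN0 : (0:ℝ) ≤ (N:ℝ)*(1+δ)*η :=
          mul_nonneg (mul_nonneg (Nat.cast_nonneg N) h1δ.le) hη.le
        exact mul_nonneg (mul_nonneg hε₁0.le (pow_nonneg hq0 N)) (Real.rpow_nonneg hN0 _)
      · filter_upwards [eventually_ge_atTop 1] with N hN1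
        have hN1' : (1:ℝ) ≤ (N:ℝ) := by exact_mod_cast hN1
        have hsplit : ((N:ℝ)*(1+δ)*η) ^ ((1:ℝ)/γ) = (N:ℝ) ^ ((1:ℝ)/γ) * ((1+δ)*η) ^ ((1:ℝ)/γ) := by
          rw [mul_assoc, Real.mul_rpow (by linarith) hPη]
        have hNk : (N:ℝ) ^ ((1:ℝ)/γ) ≤ (N:ℝ) ^ k := by
          rw [← Real.rpow_natCast (N:ℝ) k]
          exact Real.rpow_le_rpow_of_exponent_le hN1' hk
        calc r N = (ε₁ * ((1+δ)*η) ^ ((1:ℝ)/γ) * q ^ N) * (N:ℝ) ^ ((1:ℝ)/γ) := by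
              rw [hr_def]; simp only; rw [hsplit]; ring
          _ ≤ (ε₁ * ((1+δ)*η) ^ ((1:ℝ)/γ) * q ^ N) * (N:ℝ) ^ k := by
              apply mul_le_mul_of_nonneg_left hNk
              exact mul_nonneg (mul_nonneg hε₁0.le (Real.rpow_nonneg hPη _)) (pow_nonneg hq0 N)
          _ = (ε₁ * ((1+δ)*η) ^ ((1:ℝ)/γ)) * ((N:ℝ)^k * q^N) := by ring
      · have := (tendsto_pow_const_mul_const_pow_of_lt_one k hq0 hq1).const_mul
          (ε₁ * ((1+δ)*η) ^ ((1:ℝ)/γ))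
        simpa using this
    have hlim : Tendsto (fun N : ℕ => Real.Gamma (1 + 1/γ) * K + r N) atTop
        (𝓝 (Real.Gamma (1 + 1/γ) * K)) := by
      simpa using tendsto_const_nhds.add hrt
    calc limsup S atTop ≤ limsup (fun N : ℕ => Real.Gamma (1 + 1/γ) * K + r N) atTop :=
        Filter.limsup_le_limsup hUB (isCoboundedUnder_le_of_eventually_le atTop hS0)
          hlim.isBoundedUnder_le
      _ = Real.Gamma (1 + 1/γ) * K := hlim.limsup_eq
  have hcont : Tendsto (fun δ : ℝ => Real.Gamma (1 + 1/γ) * ((1+δ)/(1-δ)) ^ (1/γ))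
      (𝓝[>] (0:ℝ)) (𝓝 (Real.Gamma (1 + 1/γ))) := by
    have h1 : ContinuousAt (fun δ : ℝ => (1+δ)/(1-δ)) 0 :=
      ContinuousAt.div (continuousAt_const.add continuousAt_id)
        (continuousAt_const.sub continuousAt_id) (by norm_num)
    have h2 : ContinuousAt (fun y : ℝ => y ^ ((1:ℝ)/γ)) ((fun δ : ℝ => (1+δ)/(1-δ)) 0) := by
      have : ((fun δ : ℝ => (1+δ)/(1-δ)) 0) = 1 := by norm_num
      rw [this]
      exact Real.continuousAt_rpow_const 1 (1/γ) (Or.inl one_ne_zero)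
    have h2' := ContinuousAt.comp (g := fun y : ℝ => y ^ ((1:ℝ)/γ))
      (f := fun δ : ℝ => (1+δ)/(1-δ)) (x := 0) h2 h1
    have h3 : ContinuousAt (fun δ : ℝ => Real.Gamma (1 + 1/γ) * ((1+δ)/(1-δ)) ^ (1/γ)) 0 :=
      continuousAt_const.mul h2'
    have h4 : Tendsto (fun δ : ℝ => Real.Gamma (1 + 1/γ) * ((1+δ)/(1-δ)) ^ (1/γ))
        (𝓝[>] (0:ℝ)) (𝓝 (Real.Gamma (1 + 1/γ) * ((1+(0:ℝ))/(1-(0:ℝ))) ^ ((1:ℝ)/γ))) :=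
      h3.tendsto.mono_left nhdsWithin_le_nhds
    have hval : Real.Gamma (1 + 1/γ) * ((1+(0:ℝ))/(1-(0:ℝ))) ^ ((1:ℝ)/γ) =
        Real.Gamma (1 + 1/γ) := by
      norm_num
    rwa [hval] at h4
  exact ge_of_tendsto hcont
    (by filter_upwards [Ioo_mem_nhdsGT_of_mem (Set.mem_Ico.mpr ⟨le_refl (0:ℝ), one_pos⟩)]
        with δ hδ using key δ hδ)
end

section
/- Consider a fading multiple access channel with $N$ users with i.i.d. channel power gains $h_1,\dots,h_N$ whose common CDF belongs to class $\mathcal{C}$ with tail parameters $(\alpha_h,\beta_h,n_h,l_h,H)$, and symmetric individual average power constraints $P_{\rm ave}$. The optimal sum-rate is $R_{\rm IPL}(N)=\mathbb{E}\left[\log\left(\frac{h^\star_N}{\lambda_N}\right)\mathbf{1}\{h^\star_N\ge \lambda_N\}\right]$, where $h^\star_N=\max_i h_i$ and the Lagrange multiplier $\lambda_N>0$ is chosen so that $\mathbb{E}\left[\left(\frac{1}{\lambda_N}-\frac{1}{h_i}\right)^+\mathbf{1}\{h_i=h^\star_N\}\right]=P_{\rm ave}$. Then $\lim_{N\to\infty}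 N\lambda_N=\frac{1}{P_{\rm ave}}$ and consequently $\lim_{N\to\infty}\frac{R_{\rm IPL}(N)}{\log N}=1$. -/
set_option linter.unusedSectionVars false
set_option maxHeartbeats 1000000


open MeasureTheory ProbabilityTheory Filter Real Set Topology

/-- The maximum of `h 1, ..., h N`. -/
noncomputable def maxOver {Ω : Type*} (h : ℕ → Ω → ℝ) (N : ℕ) (ω : Ω) : ℝ :=
  sSup ((fun i => h i ω) '' Set.Icc 1 N)

section Aux

variable {Ω : Type*} [MeasurableSpace Ω] {μ : Measure Ω} [IsProbabilityMeasure μ]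
  {h : ℕ → Ω → ℝ} {F : ℝ → ℝ}

lemma IccNe {N : ℕ} (hN : 1 ≤ N) : (Finset.Icc 1 N).Nonempty :=
  ⟨1, by simp [hN]⟩

lemma maxOver_eq_sup' {N : ℕ} (hN : 1 ≤ N) (ω : Ω) :
    maxOver h N ω = (Finset.Icc 1 N).sup' (IccNe hN) (fun i => h i ω) := by
  rw [Finset.sup'_eq_csSup_image, maxOver, Finset.coe_Icc]

lemma maxOver_measurable (hmeas : ∀ i, Measurable (h i)) {N : ℕ} (hN : 1 ≤ N) :
    Measurable (maxOver h N) := by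
  have : maxOver h N = fun ω => (Finset.Icc 1 N).sup' (IccNe hN) (fun i => h i ω) := by
    funext ω; exact maxOver_eq_sup' hN ω
  rw [this]
  have hm := Finset.measurable_sup' (IccNe hN) (fun i (_ : i ∈ Finset.Icc 1 N) => hmeas i)
  convert hm using 1
  funext ω
  exact (Finset.sup'_apply (IccNe hN) h ω).symm

lemma exists_attain {N : ℕ} (hN : 1 ≤ N) (ω : Ω) :
    ∃ i ∈ Finset.Icc 1 N, h i ω = maxOver h N ω := by
  obtain ⟨i, hi, hval⟩ := Finset.exists_mem_eq_sup' (IccNe hN) (fun i => h i ω)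
  exact ⟨i, hi, by rw [maxOver_eq_sup' hN ω, hval]⟩

lemma le_maxOver {N i : ℕ} (hN : 1 ≤ N) (hi : i ∈ Finset.Icc 1 N) (ω : Ω) :
    h i ω ≤ maxOver h N ω := by
  rw [maxOver_eq_sup' hN ω]
  exact Finset.le_sup' (fun i => h i ω) hi

lemma maxOver_le_iff {N : ℕ} (hN : 1 ≤ N) (ω : Ω) (x : ℝ) :
    maxOver h N ω ≤ x ↔ ∀ i ∈ Finset.Icc 1 N, h i ω ≤ x := by
  rw [maxOver_eq_sup' hN ω, Finset.sup'_le_iff]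

lemma meas_le_eq (hcdf : ∀ i x, (μ {ω | h i ω ≤ x}).toReal = F x) (i : ℕ) (x : ℝ) :
    μ {ω | h i ω ≤ x} = ENNReal.ofReal (F x) := by
  rw [← hcdf i x, ENNReal.ofReal_toReal (measure_ne_top μ _)]

lemma cdf_max (hindep : iIndepFun h μ)
    (hcdf : ∀ i x, (μ {ω | h i ω ≤ x}).toReal = F x) {N : ℕ} (hN : 1 ≤ N) (x : ℝ) :
    μ {ω | maxOver h N ω ≤ x} = ENNReal.ofReal (F x) ^ N := by
  have hset : {ω | maxOver h N ω ≤ x} = ⋂ i ∈ Finset.Icc 1 N, {ω | h i ω ≤ x} := by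
    ext ω
    simp only [Set.mem_setOf_eq, Set.mem_iInter, maxOver_le_iff hN ω x]
  have hprod := hindep.meas_biInter (S := Finset.Icc 1 N) (s := fun i => {ω | h i ω ≤ x})
    (fun i _ => ⟨Set.Iic x, measurableSet_Iic, rfl⟩)
  rw [hset, hprod]
  have : ∀ i ∈ Finset.Icc 1 N, μ {ω | h i ω ≤ x} = ENNReal.ofReal (F x) :=
    fun i _ => meas_le_eq hcdf i x
  rw [Finset.prod_congr rfl this, Finset.prod_const, Nat.card_Icc]
  simp

lemma cdf_max_toReal (hindep : iIndepFun h μ)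
    (hcdf : ∀ i x, (μ {ω | h i ω ≤ x}).toReal = F x) {N : ℕ} (hN : 1 ≤ N) (x : ℝ) :
    (μ {ω | maxOver h N ω ≤ x}).toReal = F x ^ N := by
  rw [cdf_max hindep hcdf hN x, ENNReal.toReal_pow, ENNReal.toReal_ofReal]
  rw [← hcdf 1 x]
  exact ENNReal.toReal_nonneg

end Aux

section Aux2

variable {Ω : Type*} [MeasurableSpace Ω] {μ : Measure Ω} [IsProbabilityMeasure μ]
  {h : ℕ → Ω → ℝ} {F : ℝ → ℝ}

lemma atom_zero (hmeas : ∀ i, Measurable (h i))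
    (hcdf : ∀ i x, (μ {ω | h i ω ≤ x}).toReal = F x) (hFcont : Continuous F)
    (i : ℕ) (c : ℝ) : μ {ω | h i ω = c} = 0 := by
  have hmono : ∀ δ : ℝ, 0 < δ → (μ {ω | h i ω = c}).toReal ≤ F c - F (c - δ) := by
    intro δ hδ
    have hsub : {ω | h i ω = c} ⊆ {ω | h i ω ≤ c} \ {ω | h i ω ≤ c - δ} := by
      intro ω hω
      simp only [Set.mem_setOf_eq] at hω
      constructor
      · simp [Set.mem_setOf_eq, hω]
      · simp [Set.mem_setOf_eq, hω]; linarith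
    have hBsubA : {ω | h i ω ≤ c - δ} ⊆ {ω | h i ω ≤ c} := by
      intro ω hω; simp only [Set.mem_setOf_eq] at *; linarith
    have hdiff : μ ({ω | h i ω ≤ c} \ {ω | h i ω ≤ c - δ})
        = μ {ω | h i ω ≤ c} - μ {ω | h i ω ≤ c - δ} :=
      measure_diff hBsubA ((hmeas i measurableSet_Iic : MeasurableSet (h i ⁻¹' Set.Iic (c-δ)))).nullMeasurableSet
        (measure_ne_top μ _)
    calc (μ {ω | h i ω = c}).toReal ≤ (μ ({ω | h i ω ≤ c} \ {ω | h i ω ≤ c - δ})).toReal := by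
          apply ENNReal.toReal_mono (by rw [hdiff]; exact (tsub_le_self).trans_lt (measure_lt_top μ _) |>.ne)
          exact measure_mono hsub
      _ = F c - F (c - δ) := by
          rw [hdiff, ENNReal.toReal_sub_of_le (measure_mono hBsubA) (measure_ne_top μ _),
            hcdf, hcdf]
  have hlim : Filter.Tendsto (fun k : ℕ => F c - F (c - 1 / (k + 1))) atTop (𝓝 0) := by
    have h1 : Filter.Tendsto (fun k : ℕ => c - 1 / ((k : ℝ) + 1)) atTop (𝓝 c) := by
      have := tendsto_one_div_add_atTop_nhds_zero_nat (𝕜 := ℝ)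
      have := (tendsto_const_nhds (x := c) (f := atTop (α := ℕ))).sub this
      simpa using this
    have h2 := (hFcont.tendsto c).comp h1
    have := (tendsto_const_nhds (x := F c) (f := atTop (α := ℕ))).sub h2
    simpa using this
  have hle : (μ {ω | h i ω = c}).toReal ≤ 0 := by
    apply ge_of_tendsto hlim
    filter_upwards with k
    exact hmono (1 / (k + 1)) (by positivity)
  have h0 : (μ {ω | h i ω = c}).toReal = 0 := le_antisymm hle ENNReal.toReal_nonneg
  exact (ENNReal.toReal_eq_zero_iff _).mp h0 |>.resolve_right (measure_ne_top μ _)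

lemma pair_zero (hmeas : ∀ i, Measurable (h i))
    (hindep : iIndepFun h μ)
    (hcdf : ∀ i x, (μ {ω | h i ω ≤ x}).toReal = F x) (hFcont : Continuous F)
    {i j : ℕ} (hij : i ≠ j) : μ {ω | h i ω = h j ω} = 0 := by
  have hid : IndepFun (h i) (h j) μ := hindep.indepFun hij
  have hmap : μ.map (fun ω => (h i ω, h j ω)) = (μ.map (h i)).prod (μ.map (h j)) :=
    (indepFun_iff_map_prod_eq_prod_map_map (hmeas i).aemeasurable (hmeas j).aemeasurable).mp hid
  have hdiag : MeasurableSet {p : ℝ × ℝ | p.1 = p.2} :=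
    measurableSet_eq_fun measurable_fst measurable_snd
  have : μ {ω | h i ω = h j ω}
      = (μ.map (fun ω => (h i ω, h j ω))) {p : ℝ × ℝ | p.1 = p.2} := by
    rw [Measure.map_apply ((hmeas i).prodMk (hmeas j)) hdiag]
    rfl
  rw [this, hmap, Measure.prod_apply hdiag]
  have hz : ∀ x : ℝ, (μ.map (h j)) (Prod.mk x ⁻¹' {p : ℝ × ℝ | p.1 = p.2}) = 0 := by
    intro x
    have hpre : (Prod.mk x ⁻¹' {p : ℝ × ℝ | p.1 = p.2}) = {x} := by
      ext y
      simp [eq_comm]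
    rw [hpre, Measure.map_apply (hmeas j) (measurableSet_singleton x)]
    have : h j ⁻¹' {x} = {ω | h j ω = x} := rfl
    rw [this]
    exact atom_zero hmeas hcdf hFcont j x
  rw [lintegral_congr hz]
  exact lintegral_zero

end Aux2

section Aux3

variable {Ω : Type*} [MeasurableSpace Ω] {μ : Measure Ω} [IsProbabilityMeasure μ]
  {h : ℕ → Ω → ℝ} {F : ℝ → ℝ}

lemma F_nonneg (hcdf : ∀ i x, (μ {ω | h i ω ≤ x}).toReal = F x) (x : ℝ) : 0 ≤ F x := by
  rw [← hcdf 1 x]; exact ENNReal.toReal_nonneg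

lemma F_le_one (hcdf : ∀ i x, (μ {ω | h i ω ≤ x}).toReal = F x) (x : ℝ) : F x ≤ 1 := by
  rw [← hcdf 1 x]
  have := prob_le_one (μ := μ) (s := {ω | h 1 ω ≤ x})
  calc (μ {ω | h 1 ω ≤ x}).toReal ≤ (1 : ENNReal).toReal :=
        ENNReal.toReal_mono (by simp) this
    _ = 1 := by simp

lemma meas_gt_eq (hcdf : ∀ i x, (μ {ω | h i ω ≤ x}).toReal = F x) (i : ℕ)
    (hmeas : ∀ i, Measurable (h i)) (x : ℝ) :
    μ {ω | x < h i ω} = ENNReal.ofReal (1 - F x) := by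
  have hm : MeasurableSet {ω | h i ω ≤ x} :=
    (hmeas i measurableSet_Iic : MeasurableSet (h i ⁻¹' Set.Iic x))
  have hc : {ω | x < h i ω} = {ω | h i ω ≤ x}ᶜ := by ext ω; simp
  rw [hc, measure_compl hm (measure_ne_top μ _), meas_le_eq hcdf i x, measure_univ,
    ENNReal.ofReal_sub 1 (F_nonneg hcdf x), ENNReal.ofReal_one]

/-- `x^p * (1 - F x) → 0` for every power `p`. -/
lemma tail_small {α β n : ℝ}
    (hα : 0 < α) (hβ : 0 < β) (hn : 0 < n) {l : ℝ} {H : ℝ → ℝ}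
    (hHo : H =o[atTop] fun x => x ^ n)
    (htail : Filter.Tendsto
      (fun x => (1 - F x) / (α * x ^ l * Real.exp (-β * x ^ n + H x)))
      atTop (𝓝 1)) (p : ℝ) :
    Filter.Tendsto (fun x => x ^ p * (1 - F x)) atTop (𝓝 0) := by
  set D : ℝ → ℝ := fun x => α * x ^ l * Real.exp (-β * x ^ n + H x) with hD
  have base := tendsto_rpow_mul_exp_neg_mul_atTop_nhds_zero ((p + l) / n) (β / 2) (by positivity)
  have comp := base.comp (tendsto_rpow_atTop hn)
  have h1 : Filter.Tendsto (fun x : ℝ => x ^ (p + l) * Real.exp (-(β / 2) * x ^ n))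
      atTop (𝓝 0) := by
    apply comp.congr'
    filter_upwards [eventually_gt_atTop 0] with x hx
    simp only [Function.comp_apply]
    rw [← Real.rpow_mul hx.le]
    have : n * ((p + l) / n) = p + l := by field_simp
    rw [this]
  have hHb : ∀ᶠ x in atTop, |H x| ≤ (β / 2) * x ^ n := by
    have := hHo.def (by positivity : (0:ℝ) < β / 2)
    filter_upwards [this, eventually_ge_atTop 0] with x hx hx0
    rwa [Real.norm_eq_abs, Real.norm_eq_abs, abs_of_nonneg (Real.rpow_nonneg hx0 n)] at hx
  have hcong : ∀ᶠ x in atTop,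
      ((1 - F x) / D x) * (x ^ p * D x) = x ^ p * (1 - F x) := by
    filter_upwards [eventually_gt_atTop 0] with x hx
    have hDpos : 0 < D x := by
      have : 0 < x ^ l := Real.rpow_pos_of_pos hx l
      positivity
    field_simp
  have hDsmall : Filter.Tendsto (fun x => x ^ p * D x) atTop (𝓝 0) := by
    have hub : ∀ᶠ x in atTop, x ^ p * D x ≤ α * (x ^ (p + l) * Real.exp (-(β / 2) * x ^ n)) := by
      filter_upwards [hHb, eventually_gt_atTop 0] with x hHx hx
      have hexp : Real.exp (-β * x ^ n + H x) ≤ Real.exp (-(β / 2) * x ^ n) := by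
        apply Real.exp_le_exp.mpr
        have := (abs_le.mp hHx).2
        nlinarith [Real.rpow_nonneg hx.le n]
      have hxl : 0 < x ^ l := Real.rpow_pos_of_pos hx l
      have hxp : 0 < x ^ p := Real.rpow_pos_of_pos hx p
      have : x ^ p * D x = α * (x ^ (p + l) * Real.exp (-β * x ^ n + H x)) := by
        rw [Real.rpow_add hx]; ring
      rw [this]
      have h2 : 0 < x ^ (p + l) := Real.rpow_pos_of_pos hx _
      gcongr
    have hlb : ∀ᶠ x in atTop, 0 ≤ x ^ p * D x := by
      filter_upwards [eventually_gt_atTop 0] with x hx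
      have hxl : 0 < x ^ l := Real.rpow_pos_of_pos hx l
      have hxp : 0 < x ^ p := Real.rpow_pos_of_pos hx p
      positivity
    have hub0 : Filter.Tendsto (fun x => α * (x ^ (p + l) * Real.exp (-(β / 2) * x ^ n)))
        atTop (𝓝 0) := by
      have := h1.const_mul α
      simpa using this
    exact squeeze_zero' hlb hub hub0
  have := htail.mul hDsmall
  rw [one_mul] at this
  exact this.congr' hcong

lemma F_lt_one_eventually {α β n : ℝ}
    (hα : 0 < α) (hβ : 0 < β) (hn : 0 < n) {l : ℝ} {H : ℝ → ℝ}
    (htail : Filter.Tendsto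
      (fun x => (1 - F x) / (α * x ^ l * Real.exp (-β * x ^ n + H x)))
      atTop (𝓝 1)) :
    ∀ᶠ x in atTop, F x < 1 := by
  have hev := htail.eventually (eventually_gt_nhds (show (0:ℝ) < 1 by norm_num))
  filter_upwards [hev, eventually_gt_atTop 0] with x hx hx0
  have hDpos : 0 < α * x ^ l * Real.exp (-β * x ^ n + H x) := by
    have : 0 < x ^ l := Real.rpow_pos_of_pos hx0 l
    positivity
  have hnum : 0 < 1 - F x := by
    by_contra hcon
    push_neg at hcon
    have : (1 - F x) / (α * x ^ l * Real.exp (-β * x ^ n + H x)) ≤ 0 :=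
      div_nonpos_of_nonpos_of_nonneg hcon hDpos.le
    linarith
  linarith

end Aux3

section Aux4

variable {Ω : Type*} [MeasurableSpace Ω] {μ : Measure Ω} [IsProbabilityMeasure μ]
  {h : ℕ → Ω → ℝ} {F : ℝ → ℝ}

lemma integrable_of_tailbound (f : Ω → ℝ) (hf : Measurable f) (hnn : ∀ ω, 0 ≤ f ω)
    (htb : ∀ᶠ t in atTop, μ {ω | t < f ω} ≤ ENNReal.ofReal (t ^ (-2 : ℝ))) :
    Integrable f μ := by
  obtain ⟨T₀, hT⟩ := htb.exists_forall_of_atTop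
  set T : ℝ := max T₀ 1 with hTdef
  have hT1 : (1:ℝ) ≤ T := le_max_right _ _
  have hTpos : (0:ℝ) < T := lt_of_lt_of_le one_pos hT1
  refine ⟨hf.aestronglyMeasurable, ?_⟩
  rw [hasFiniteIntegral_iff_norm]
  have heq : ∫⁻ a, ENNReal.ofReal ‖f a‖ ∂μ = ∫⁻ a, ENNReal.ofReal (f a) ∂μ := by
    apply lintegral_congr
    intro a
    rw [Real.norm_eq_abs, abs_of_nonneg (hnn a)]
  rw [heq, lintegral_eq_lintegral_meas_lt μ (Filter.Eventually.of_forall hnn) hf.aemeasurable]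
  have hsplit : Set.Ioi (0:ℝ) = Set.Ioc 0 T ∪ Set.Ioi T := (Set.Ioc_union_Ioi_eq_Ioi hTpos.le).symm
  rw [hsplit]
  rw [lintegral_union measurableSet_Ioi Set.Ioc_disjoint_Ioi_same]
  have hb1 : ∫⁻ t in Set.Ioc (0:ℝ) T, μ {a | t < f a} < ⊤ := by
    calc ∫⁻ t in Set.Ioc (0:ℝ) T, μ {a | t < f a}
        ≤ ∫⁻ _ in Set.Ioc (0:ℝ) T, 1 := by
          apply lintegral_mono
          intro t
          exact prob_le_one
      _ = volume (Set.Ioc (0:ℝ) T) := by rw [setLIntegral_const, one_mul]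
      _ < ⊤ := by rw [Real.volume_Ioc]; exact ENNReal.ofReal_lt_top
  have hb2 : ∫⁻ t in Set.Ioi T, μ {a | t < f a} < ⊤ := by
    have hint : IntegrableOn (fun t : ℝ => t ^ (-2 : ℝ)) (Set.Ioi T) :=
      integrableOn_Ioi_rpow_of_lt (by norm_num) hTpos
    calc ∫⁻ t in Set.Ioi T, μ {a | t < f a}
        ≤ ∫⁻ t in Set.Ioi T, ENNReal.ofReal (t ^ (-2:ℝ)) := by
          apply setLIntegral_mono' measurableSet_Ioi
          intro t ht
          exact hT t (le_trans (le_max_left _ _) (le_of_lt ht))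
      _ < ⊤ := hint.lintegral_lt_top
  exact ENNReal.add_lt_top.mpr ⟨hb1, hb2⟩

lemma integrable_pow_h (hmeas : ∀ i, Measurable (h i)) (hnn : ∀ i ω, 0 ≤ h i ω)
    (hcdf : ∀ i x, (μ {ω | h i ω ≤ x}).toReal = F x)
    (hts : ∀ p : ℝ, Filter.Tendsto (fun x => x ^ p * (1 - F x)) atTop (𝓝 0))
    (i : ℕ) (s : ℕ) (hs : 1 ≤ s) :
    Integrable (fun ω => h i ω ^ s) μ := by
  apply integrable_of_tailbound _ ((hmeas i).pow_const s) (fun ω => pow_nonneg (hnn i ω) s)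
  -- tail bound
  have hcomp : Filter.Tendsto (fun t : ℝ => t ^ ((s:ℝ)⁻¹)) atTop atTop :=
    tendsto_rpow_atTop (by positivity)
  have hkey := (hts (2 * s)).comp hcomp
  have hev : ∀ᶠ t in atTop, (t ^ ((s:ℝ)⁻¹)) ^ ((2 * s : ℕ) : ℝ) * (1 - F (t ^ ((s:ℝ)⁻¹))) ≤ 1 := by
    have := hkey.eventually (eventually_le_nhds (show (0:ℝ) < 1 by norm_num))
    filter_upwards [this] with t ht
    simpa using ht
  filter_upwards [hev, eventually_gt_atTop 1] with t ht ht1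
  have ht0 : (0:ℝ) < t := lt_trans one_pos ht1
  have hpow : (t ^ ((s:ℝ)⁻¹)) ^ ((2 * s : ℕ) : ℝ) = t ^ (2:ℝ) := by
    rw [← Real.rpow_mul ht0.le]
    congr 1
    push_cast
    field_simp
  rw [hpow] at ht
  -- 1 - F (t^{1/s}) ≤ t^{-2}
  have ht2 : (0:ℝ) < t ^ (2:ℝ) := Real.rpow_pos_of_pos ht0 2
  have hFb : 1 - F (t ^ ((s:ℝ)⁻¹)) ≤ t ^ (-2:ℝ) := by
    rw [Real.rpow_neg ht0.le, ← mul_le_mul_iff_of_pos_right ht2, inv_mul_cancel₀ ht2.ne', mul_comm]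
    exact ht
  -- subset
  have hsub : {ω | t < h i ω ^ s} ⊆ {ω | t ^ ((s:ℝ)⁻¹) < h i ω} := by
    intro ω hω
    simp only [Set.mem_setOf_eq] at *
    by_contra hcon
    push_neg at hcon
    have : h i ω ^ s ≤ (t ^ ((s:ℝ)⁻¹)) ^ s := pow_le_pow_left₀ (hnn i ω) hcon s
    have heq : (t ^ ((s:ℝ)⁻¹)) ^ s = t := by
      rw [← Real.rpow_natCast (t ^ ((s:ℝ)⁻¹)) s, ← Real.rpow_mul ht0.le]
      rw [inv_mul_cancel₀ (by positivity : (s:ℝ) ≠ 0), Real.rpow_one]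
    rw [heq] at this
    linarith
  calc μ {ω | t < h i ω ^ s} ≤ μ {ω | t ^ ((s:ℝ)⁻¹) < h i ω} := measure_mono hsub
    _ = ENNReal.ofReal (1 - F (t ^ ((s:ℝ)⁻¹))) := meas_gt_eq hcdf i hmeas _
    _ ≤ ENNReal.ofReal (t ^ (-2:ℝ)) := ENNReal.ofReal_le_ofReal hFb

lemma map_eq_map (hmeas : ∀ i, Measurable (h i))
    (hcdf : ∀ i x, (μ {ω | h i ω ≤ x}).toReal = F x) (i j : ℕ) :
    μ.map (h i) = μ.map (h j) := by
  apply MeasureTheory.Measure.ext_of_Iic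
  intro a
  rw [Measure.map_apply (hmeas i) measurableSet_Iic,
    Measure.map_apply (hmeas j) measurableSet_Iic]
  have : h i ⁻¹' Set.Iic a = {ω | h i ω ≤ a} := rfl
  have h2 : h j ⁻¹' Set.Iic a = {ω | h j ω ≤ a} := rfl
  rw [this, h2, meas_le_eq hcdf i a, meas_le_eq hcdf j a]

lemma integral_pow_eq (hmeas : ∀ i, Measurable (h i))
    (hcdf : ∀ i x, (μ {ω | h i ω ≤ x}).toReal = F x) (i : ℕ) (s : ℕ) :
    ∫ ω, h i ω ^ s ∂μ = ∫ ω, h 1 ω ^ s ∂μ := by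
  have h1 : ∫ ω, h i ω ^ s ∂μ = ∫ x, x ^ s ∂(μ.map (h i)) :=
    (integral_map (hmeas i).aemeasurable ((measurable_id.pow_const s).aestronglyMeasurable)).symm
  have h2 : ∫ ω, h 1 ω ^ s ∂μ = ∫ x, x ^ s ∂(μ.map (h 1)) :=
    (integral_map (hmeas 1).aemeasurable ((measurable_id.pow_const s).aestronglyMeasurable)).symm
  rw [h1, h2, map_eq_map hmeas hcdf i 1]

end Aux4

/-- Sum-rate scaling of a primary MAC with symmetric individual power constraints:
if `λ_N` satisfies the power constraint `E[(1/λ_N - 1/h_i)⁺ 1{h_i = h*_N}] = P_ave`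
for each user, then `N λ_N → 1/P_ave` and the sum-rate
`R_IPL(N) = E[log(h*_N/λ_N) 1{h*_N ≥ λ_N}]` satisfies `R_IPL(N)/log N → 1`. -/
theorem primary_mac_individual_power_scaling
    {Ω : Type*} [MeasurableSpace Ω] (μ : Measure Ω) [IsProbabilityMeasure μ]
    (h : ℕ → Ω → ℝ) (hmeas : ∀ i, Measurable (h i)) (hnn : ∀ i ω, 0 ≤ h i ω)
    (hindep : iIndepFun h μ)
    (F : ℝ → ℝ) (hcdf : ∀ i x, (μ {ω | h i ω ≤ x}).toReal = F x)
    (hFcont : Continuous F) (hFmono : StrictMonoOn F (Set.Ioi 0))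
    (hsupp : ∀ x ≤ (0 : ℝ), F x = 0)
    (α β n l : ℝ) (hα : 0 < α) (hβ : 0 < β) (hn : 0 < n)
    (H : ℝ → ℝ)
    (hslow : ∀ a > (0 : ℝ), Tendsto (fun x => H (a * x) / H x) atTop (𝓝 1))
    (hHo : H =o[atTop] fun x => x ^ n)
    (htail : Tendsto
      (fun x => (1 - F x) / (α * x ^ l * Real.exp (-β * x ^ n + H x)))
      atTop (𝓝 1))
    (η γ : ℝ) (hη : 0 < η) (hγ : 0 < γ)
    (horigin : Tendsto (fun x => F x / (η * x ^ γ)) (𝓝[>] 0) (𝓝 1))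
    (Pave : ℝ) (hPave : 0 < Pave)
    (lam : ℕ → ℝ) (hlampos : ∀ N, 0 < lam N)
    (hconstraint : ∀ N : ℕ, 1 ≤ N → ∀ i ∈ Finset.Icc 1 N,
      (∫ ω, (if h i ω = maxOver h N ω then max (1 / lam N - 1 / h i ω) 0 else 0) ∂μ)
        = Pave) :
    Tendsto (fun N : ℕ => (N : ℝ) * lam N) atTop (𝓝 (1 / Pave)) ∧
    Tendsto (fun N : ℕ =>
      (∫ ω, (if lam N ≤ maxOver h N ω then Real.log (maxOver h N ω / lam N) else 0) ∂μ) /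
        Real.log N) atTop (𝓝 1) := by
  -- Basic notation
  set g : ℕ → Ω → ℝ := fun N => maxOver h N with hg
  have hts : ∀ p : ℝ, Tendsto (fun x => x ^ p * (1 - F x)) atTop (𝓝 0) :=
    tail_small hα hβ hn hHo htail
  -- choose x0 ≥ 1 with F x0 < 1
  obtain ⟨x0, hFx0, hx0ge⟩ :=
    ((F_lt_one_eventually hα hβ hn htail).and (eventually_ge_atTop (1:ℝ))).exists
  have hx0pos : (0:ℝ) < x0 := lt_of_lt_of_le one_pos hx0ge
  have hF0 : 0 ≤ F x0 := F_nonneg hcdf x0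
  -- q N
  set q : ℕ → ℝ := fun N => 1 - F x0 ^ N with hq
  have hqpos : ∀ N : ℕ, 1 ≤ N → 0 < q N := by
    intro N hN
    have : F x0 ^ N < 1 := pow_lt_one₀ hF0 hFx0 (by omega)
    simp only [hq]; linarith
  have hqle : ∀ N : ℕ, q N ≤ 1 := by
    intro N
    have : 0 ≤ F x0 ^ N := pow_nonneg hF0 N
    simp only [hq]; linarith
  have hqlim : Tendsto q atTop (𝓝 1) := by
    have h0 : Tendsto (fun N : ℕ => F x0 ^ N) atTop (𝓝 0) :=
      tendsto_pow_atTop_nhds_zero_of_lt_one hF0 hFx0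
    have := (tendsto_const_nhds (x := (1:ℝ)) (f := atTop (α := ℕ))).sub h0
    simpa using this
  -- the summand functions
  set φ : ℕ → ℕ → Ω → ℝ := fun N i ω =>
    if h i ω = maxOver h N ω then max (1 / lam N - 1 / h i ω) 0 else 0 with hφ
  have hφnonneg : ∀ N i ω, 0 ≤ φ N i ω := by
    intro N i ω
    simp only [hφ]
    split
    · exact le_max_right _ _
    · exact le_refl 0
  have hφle : ∀ N i ω, φ N i ω ≤ 1 / lam N := by
    intro N i ω
    have hl : 0 < 1 / lam N := one_div_pos.mpr (hlampos N)
    simp only [hφ]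
    split
    · apply max_le _ hl.le
      have : 0 ≤ 1 / h i ω := one_div_nonneg.mpr (hnn i ω)
      linarith
    · exact hl.le
  have hφmeas : ∀ N i, 1 ≤ N → Measurable (φ N i) := by
    intro N i hN
    apply Measurable.ite (measurableSet_eq_fun (hmeas i) (maxOver_measurable hmeas hN))
    · exact (measurable_const.sub (measurable_const.div (hmeas i))).max measurable_const
    · exact measurable_const
  have hφint : ∀ N i, 1 ≤ N → Integrable (φ N i) μ := by
    intro N i hN
    refine ⟨(hφmeas N i hN).aestronglyMeasurable, ?_⟩
    apply HasFiniteIntegral.of_bounded (C := 1 / lam N)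
    filter_upwards with ω
    rw [Real.norm_eq_abs, abs_of_nonneg (hφnonneg N i ω)]
    exact hφle N i ω
  -- sum function
  set Φ : ℕ → Ω → ℝ := fun N ω => ∑ i ∈ Finset.Icc 1 N, φ N i ω with hΦ
  have hΦint : ∀ N, 1 ≤ N → Integrable (Φ N) μ := by
    intro N hN
    exact integrable_finset_sum _ (fun i _ => hφint N i hN)
  have hkey : ∀ N, 1 ≤ N → ∫ ω, Φ N ω ∂μ = N * Pave := by
    intro N hN
    rw [hΦ]
    rw [integral_finset_sum _ (fun i _ => hφint N i hN)]
    have : ∀ i ∈ Finset.Icc 1 N, ∫ ω, φ N i ω ∂μ = Pave := fun i hi =>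
      hconstraint N hN i hi
    rw [Finset.sum_congr rfl this, Finset.sum_const, Nat.card_Icc]
    simp [mul_comm]
  -- Step B : lam N ≤ 1 / (N * Pave)
  have haedistinct : ∀ᵐ ω ∂μ, ∀ i j : ℕ, i ≠ j → h i ω ≠ h j ω := by
    rw [ae_all_iff]
    intro i
    rw [ae_all_iff]
    intro j
    by_cases hij : i = j
    · filter_upwards with ω hcon; exact absurd hij hcon
    · have := pair_zero hmeas hindep hcdf hFcont hij
      rw [ae_iff]
      convert this using 2
      ext ω
      simp only [Set.mem_setOf_eq]
      push_neg
      constructor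
      · rintro ⟨-, hv⟩; exact hv
      · intro hv; exact ⟨hij, hv⟩
  have hstepB : ∀ N : ℕ, 1 ≤ N → (N:ℝ) * Pave ≤ 1 / lam N := by
    intro N hN
    rw [← hkey N hN]
    have hb : ∀ᵐ ω ∂μ, Φ N ω ≤ 1 / lam N := by
      filter_upwards [haedistinct] with ω hdist
      obtain ⟨i₀, hi₀, hval⟩ := exists_attain (h := h) hN ω
      have : Φ N ω = φ N i₀ ω := by
        apply Finset.sum_eq_single_of_mem i₀ hi₀
        intro j hj hne
        have : h j ω ≠ maxOver h N ω := by
          rw [← hval]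
          exact hdist j i₀ hne
        simp only [hφ, if_neg this]
      rw [this]
      exact hφle N i₀ ω
    calc ∫ ω, Φ N ω ∂μ ≤ ∫ _ω, 1 / lam N ∂μ :=
          integral_mono_ae (hΦint N hN) (integrable_const _) hb
      _ = 1 / lam N := by simp
  have hlamle : ∀ N : ℕ, 1 ≤ N → lam N ≤ 1 / ((N:ℝ) * Pave) := by
    intro N hN
    have hNpos : (0:ℝ) < (N:ℝ) * Pave := by
      have : (0:ℝ) < (N:ℝ) := by exact_mod_cast hN
      positivity
    have := hstepB N hN
    rw [le_div_iff₀ (hlampos N)] at this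
    rw [le_div_iff₀ hNpos]
    nlinarith [this]
  -- μ {x0 ≤ g N} lower bound
  have hmeasA : ∀ N : ℕ, 1 ≤ N → MeasurableSet {ω | x0 ≤ maxOver h N ω} :=
    fun N hN => (maxOver_measurable hmeas hN measurableSet_Ici :
      MeasurableSet (maxOver h N ⁻¹' Set.Ici x0))
  have hA : ∀ N : ℕ, 1 ≤ N → q N ≤ (μ {ω | x0 ≤ maxOver h N ω}).toReal := by
    intro N hN
    have hcompl : {ω | x0 ≤ maxOver h N ω}ᶜ ⊆ {ω | maxOver h N ω ≤ x0} := by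
      intro ω hω
      simp only [Set.mem_compl_iff, Set.mem_setOf_eq, not_le] at hω ⊢
      exact hω.le
    have hsum : μ {ω | x0 ≤ maxOver h N ω} + μ {ω | x0 ≤ maxOver h N ω}ᶜ = 1 := by
      rw [measure_add_measure_compl (hmeasA N hN), measure_univ]
    have h1 : (μ {ω | x0 ≤ maxOver h N ω}).toReal
        + (μ {ω | x0 ≤ maxOver h N ω}ᶜ).toReal = 1 := by
      rw [← ENNReal.toReal_add (measure_ne_top μ _) (measure_ne_top μ _), hsum]
      simp
    have h2 : (μ {ω | x0 ≤ maxOver h N ω}ᶜ).toReal ≤ F x0 ^ N := by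
      rw [← cdf_max_toReal hindep hcdf hN x0]
      exact ENNReal.toReal_mono (measure_ne_top μ _) (measure_mono hcompl)
    simp only [hq]
    linarith
  -- Step C lower bound
  have hstepC : ∀ N : ℕ, 1 ≤ N → lam N ≤ x0 →
      (1 / lam N - 1 / x0) * q N ≤ (N:ℝ) * Pave := by
    intro N hN hlx
    have hcpos : 0 ≤ 1 / lam N - 1 / x0 := by
      have := one_div_le_one_div_of_le (hlampos N) hlx
      linarith
    have hpt : ∀ ω, (if x0 ≤ maxOver h N ω then (1 / lam N - 1 / x0) else 0) ≤ Φ N ω := by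
      intro ω
      split
      case isTrue hx =>
        obtain ⟨i₀, hi₀, hval⟩ := exists_attain (h := h) hN ω
        have h1 : (1 / lam N - 1 / x0) ≤ φ N i₀ ω := by
          simp only [hφ, if_pos hval]
          apply le_max_of_le_left
          have hgpos : 0 < maxOver h N ω := lt_of_lt_of_le hx0pos hx
          have : 1 / h i₀ ω ≤ 1 / x0 := by
            rw [hval]
            exact one_div_le_one_div_of_le hx0pos hx
          linarith
        calc (1 / lam N - 1 / x0) ≤ φ N i₀ ω := h1
          _ ≤ Φ N ω := Finset.single_le_sum (fun j _ => hφnonneg N j ω) hi₀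
      case isFalse hx =>
        exact Finset.sum_nonneg (fun j _ => hφnonneg N j ω)
    have hindint : Integrable
        (fun ω => if x0 ≤ maxOver h N ω then (1 / lam N - 1 / x0) else 0) μ := by
      have : (fun ω => if x0 ≤ maxOver h N ω then (1 / lam N - 1 / x0) else 0)
          = Set.indicator {ω | x0 ≤ maxOver h N ω} (fun _ => (1 / lam N - 1 / x0)) := by
        funext ω
        rw [Set.indicator_apply]
        simp [Set.mem_setOf_eq]
      rw [this]
      exact (integrable_const _).indicator (hmeasA N hN)
    have hint_eq : ∫ ω, (if x0 ≤ maxOver h N ω then (1 / lam N - 1 / x0) else 0) ∂μ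
        = (μ {ω | x0 ≤ maxOver h N ω}).toReal * (1 / lam N - 1 / x0) := by
      have : (fun ω => if x0 ≤ maxOver h N ω then (1 / lam N - 1 / x0) else 0)
          = Set.indicator {ω | x0 ≤ maxOver h N ω} (fun _ => (1 / lam N - 1 / x0)) := by
        funext ω
        rw [Set.indicator_apply]
        simp [Set.mem_setOf_eq]
      rw [this, integral_indicator_const _ (hmeasA N hN)]
      simp [smul_eq_mul, measureReal_def]
    have hmono := integral_mono hindint (hΦint N hN) hpt
    rw [hint_eq, hkey N hN] at hmono
    calc (1 / lam N - 1 / x0) * q N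
        ≤ (1 / lam N - 1 / x0) * (μ {ω | x0 ≤ maxOver h N ω}).toReal :=
          mul_le_mul_of_nonneg_left (hA N hN) hcpos
      _ = (μ {ω | x0 ≤ maxOver h N ω}).toReal * (1 / lam N - 1 / x0) := mul_comm _ _
      _ ≤ (N:ℝ) * Pave := hmono
  -- eventual smallness of lam
  have hlam0 : Tendsto lam atTop (𝓝 0) := by
    have hub : Tendsto (fun N : ℕ => 1 / ((N:ℝ) * Pave)) atTop (𝓝 0) := by
      have hbase : Tendsto (fun N : ℕ => (N:ℝ) * Pave) atTop atTop :=
        tendsto_natCast_atTop_atTop.atTop_mul_const hPave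
      have := tendsto_inv_atTop_zero.comp hbase
      apply this.congr
      intro N
      simp [Function.comp, one_div]
    apply squeeze_zero' (Filter.Eventually.of_forall (fun N => (hlampos N).le))
      _ hub
    filter_upwards [eventually_ge_atTop 1] with N hN
    exact hlamle N hN
  -- Part 1
  have hpart1 : Tendsto (fun N : ℕ => (N : ℝ) * lam N) atTop (𝓝 (1 / Pave)) := by
    have hupper : ∀ᶠ N : ℕ in atTop, (N:ℝ) * lam N ≤ 1 / Pave := by
      filter_upwards [eventually_ge_atTop 1] with N hN
      have hle := hlamle N hN
      have hNpos : (0:ℝ) < (N:ℝ) := by exact_mod_cast hN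
      calc (N:ℝ) * lam N ≤ (N:ℝ) * (1/((N:ℝ)*Pave)) :=
            mul_le_mul_of_nonneg_left hle hNpos.le
        _ = 1 / Pave := by field_simp
    have hLlim : Tendsto (fun N : ℕ => q N / (Pave + q N / (x0 * N))) atTop (𝓝 (1/Pave)) := by
      have hden : Tendsto (fun N : ℕ => Pave + q N / (x0 * (N:ℝ))) atTop (𝓝 Pave) := by
        have h1 : Tendsto (fun N : ℕ => x0 * (N:ℝ)) atTop atTop :=
          Tendsto.const_mul_atTop hx0pos tendsto_natCast_atTop_atTop
        have h2 : Tendsto (fun N : ℕ => q N / (x0 * (N:ℝ))) atTop (𝓝 0) :=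
          hqlim.div_atTop h1
        have := (tendsto_const_nhds (x := Pave) (f := atTop (α := ℕ))).add h2
        simpa using this
      have hone : (1:ℝ)/Pave = 1/Pave := rfl
      have := hqlim.div hden hPave.ne'
      exact this
    have hlower : ∀ᶠ N : ℕ in atTop, q N / (Pave + q N / (x0 * (N:ℝ))) ≤ (N:ℝ) * lam N := by
      have hev : ∀ᶠ N : ℕ in atTop, lam N ≤ x0 :=
        hlam0.eventually (eventually_le_nhds hx0pos)
      filter_upwards [hev, eventually_ge_atTop 1] with N hlx hN
      have hC := hstepC N hN hlx
      have hl := hlampos N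
      have hqp := hqpos N hN
      have hNpos : (0:ℝ) < (N:ℝ) := by exact_mod_cast hN
      have hD : 0 < Pave + q N / (x0 * (N:ℝ)) := by positivity
      rw [div_le_iff₀ hD]
      have h1 : (1 / lam N - 1 / x0) * q N * lam N ≤ ((N:ℝ) * Pave) * lam N :=
        mul_le_mul_of_nonneg_right hC hl.le
      have h2 : (1 / lam N - 1 / x0) * q N * lam N = q N - q N * lam N / x0 := by
        field_simp
      have h3 : ((N:ℝ) * lam N) * (Pave + q N / (x0 * (N:ℝ)))
          = (N:ℝ)*Pave*lam N + q N * lam N / x0 := by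
        field_simp
      rw [h3]
      rw [h2] at h1
      linarith
    exact tendsto_of_tendsto_of_tendsto_of_le_of_le' hLlim tendsto_const_nhds hlower hupper
  refine ⟨hpart1, ?_⟩
  -- Part 2
  set r : ℕ → Ω → ℝ := fun N ω =>
    if lam N ≤ maxOver h N ω then Real.log (maxOver h N ω / lam N) else 0 with hr
  have hlogN : Tendsto (fun N : ℕ => Real.log N) atTop atTop :=
    Real.tendsto_log_atTop.comp tendsto_natCast_atTop_atTop
  have hloglam : Tendsto (fun N : ℕ => Real.log (lam N) / Real.log N) atTop (𝓝 (-1)) := by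
    have hlogmul : Tendsto (fun N : ℕ => Real.log ((N:ℝ) * lam N)) atTop
        (𝓝 (Real.log (1/Pave))) := by
      have hcont : ContinuousAt Real.log (1/Pave) :=
        Real.continuousAt_log (by positivity)
      exact hcont.tendsto.comp hpart1
    have hdiv : Tendsto (fun N : ℕ => Real.log ((N:ℝ) * lam N) / Real.log N) atTop (𝓝 0) :=
      hlogmul.div_atTop hlogN
    have := hdiv.sub (tendsto_const_nhds (x := (1:ℝ)) (f := atTop (α := ℕ)))
    rw [zero_sub] at this
    apply this.congr'
    filter_upwards [eventually_ge_atTop 2] with N hN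
    have hN1 : (1:ℝ) < (N:ℝ) := by exact_mod_cast hN
    have hlogNpos : 0 < Real.log N := Real.log_pos hN1
    have hNne : ((N:ℝ)) ≠ 0 := by positivity
    rw [Real.log_mul hNne (hlampos N).ne']
    field_simp
    ring
  have hrnn : ∀ N ω, 0 ≤ r N ω := by
    intro N ω
    simp only [hr]
    split
    case isTrue hx =>
      apply Real.log_nonneg
      rw [le_div_iff₀ (hlampos N), one_mul]
      exact hx
    case isFalse hx => exact le_refl 0
  have hrmeas : ∀ N : ℕ, 1 ≤ N → Measurable (r N) := by
    intro N hN
    apply Measurable.ite (measurableSet_le measurable_const (maxOver_measurable hmeas hN))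
    · exact Real.measurable_log.comp ((maxOver_measurable hmeas hN).div_const (lam N))
    · exact measurable_const
  have hint1 : ∀ i : ℕ, Integrable (h i) μ := by
    intro i
    have := integrable_pow_h hmeas hnn hcdf hts i 1 le_rfl
    simpa using this
  have hgnn : ∀ N : ℕ, 1 ≤ N → ∀ ω, 0 ≤ maxOver h N ω := by
    intro N hN ω
    exact le_trans (hnn 1 ω) (le_maxOver hN (by simp [hN]) ω)
  have hgleSum : ∀ N : ℕ, 1 ≤ N → ∀ (s : ℕ) ω,
      maxOver h N ω ^ s ≤ ∑ i ∈ Finset.Icc 1 N, h i ω ^ s := by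
    intro N hN s ω
    obtain ⟨i₀, hi₀, hval⟩ := exists_attain (h := h) hN ω
    calc maxOver h N ω ^ s = h i₀ ω ^ s := by rw [hval]
      _ ≤ ∑ i ∈ Finset.Icc 1 N, h i ω ^ s :=
        Finset.single_le_sum (fun j _ => pow_nonneg (hnn j ω) s) hi₀
  have hrint : ∀ N : ℕ, 1 ≤ N → Integrable (r N) μ := by
    intro N hN
    apply Integrable.mono' ((integrable_const (|Real.log (lam N)|)).add
      (integrable_finset_sum _ (fun i (_ : i ∈ Finset.Icc 1 N) => hint1 i)))
      (hrmeas N hN).aestronglyMeasurable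
    filter_upwards with ω
    rw [Real.norm_eq_abs, abs_of_nonneg (hrnn N ω)]
    simp only [Pi.add_apply]
    simp only [hr]
    split
    case isTrue hx =>
      have hgpos : 0 < maxOver h N ω := lt_of_lt_of_le (hlampos N) hx
      rw [Real.log_div hgpos.ne' (hlampos N).ne']
      have h1 : Real.log (maxOver h N ω) ≤ maxOver h N ω := by
        have := Real.log_le_sub_one_of_pos hgpos
        linarith
      have h2 : maxOver h N ω ≤ ∑ i ∈ Finset.Icc 1 N, h i ω := by
        have := hgleSum N hN 1 ω
        simpa using this
      have h3 : -Real.log (lam N) ≤ |Real.log (lam N)| := neg_le_abs _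
      linarith
    case isFalse hx =>
      have h2 : 0 ≤ ∑ i ∈ Finset.Icc 1 N, h i ω :=
        Finset.sum_nonneg (fun j _ => hnn j ω)
      have h3 : 0 ≤ |Real.log (lam N)| := abs_nonneg _
      linarith
  -- lower bound for R
  have hRlow : ∀ᶠ N : ℕ in atTop,
      (Real.log x0 - Real.log (lam N)) * q N ≤ ∫ ω, r N ω ∂μ := by
    have hev : ∀ᶠ N : ℕ in atTop, lam N ≤ x0 :=
      hlam0.eventually (eventually_le_nhds hx0pos)
    filter_upwards [hev, eventually_ge_atTop 1] with N hlx hN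
    set c : ℝ := Real.log x0 - Real.log (lam N) with hc
    have hcnn : 0 ≤ c := by
      have := Real.log_le_log (hlampos N) hlx
      simp only [hc]; linarith
    have hpt : ∀ ω, (if x0 ≤ maxOver h N ω then c else 0) ≤ r N ω := by
      intro ω
      split
      case isTrue hx =>
        have hcase : lam N ≤ maxOver h N ω := le_trans hlx hx
        simp only [hr, if_pos hcase]
        have hgpos : 0 < maxOver h N ω := lt_of_lt_of_le hx0pos hx
        rw [Real.log_div hgpos.ne' (hlampos N).ne']
        have := Real.log_le_log hx0pos hx
        simp only [hc]; linarith
      case isFalse hx => exact hrnn N ω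
    have hindint : Integrable (fun ω => if x0 ≤ maxOver h N ω then c else 0) μ := by
      have heq : (fun ω => if x0 ≤ maxOver h N ω then c else 0)
          = Set.indicator {ω | x0 ≤ maxOver h N ω} (fun _ => c) := by
        funext ω
        rw [Set.indicator_apply]
        simp [Set.mem_setOf_eq]
      rw [heq]
      exact (integrable_const _).indicator (hmeasA N hN)
    have hint_eq : ∫ ω, (if x0 ≤ maxOver h N ω then c else 0) ∂μ
        = (μ {ω | x0 ≤ maxOver h N ω}).toReal * c := by
      have heq : (fun ω => if x0 ≤ maxOver h N ω then c else 0)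
          = Set.indicator {ω | x0 ≤ maxOver h N ω} (fun _ => c) := by
        funext ω
        rw [Set.indicator_apply]
        simp [Set.mem_setOf_eq]
      rw [heq, integral_indicator_const _ (hmeasA N hN)]
      simp [smul_eq_mul, measureReal_def]
    have hmono := integral_mono hindint (hrint N hN) hpt
    rw [hint_eq] at hmono
    calc c * q N = q N * c := mul_comm _ _
      _ ≤ (μ {ω | x0 ≤ maxOver h N ω}).toReal * c :=
        mul_le_mul_of_nonneg_right (hA N hN) hcnn
      _ ≤ ∫ ω, r N ω ∂μ := hmono
  have hlamlt1 : ∀ᶠ N : ℕ in atTop, lam N < 1 := hlam0.eventually (eventually_lt_nhds one_pos)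
  have hRupper : ∀ s : ℕ, 1 ≤ s → ∀ᶠ N : ℕ in atTop,
      ∫ ω, r N ω ∂μ ≤ (2/(s:ℝ)) * Real.log N
        + (∫ ω, h 1 ω ^ s ∂μ)/((s:ℝ)*(N:ℝ)) - Real.log (lam N) := by
    intro s hs
    filter_upwards [eventually_ge_atTop 1, hlamlt1] with N hN hl1
    have hNpos : (0:ℝ) < (N:ℝ) := by exact_mod_cast hN
    have hN1 : (1:ℝ) ≤ (N:ℝ) := by exact_mod_cast hN
    have hspos : (0:ℝ) < (s:ℝ) := by exact_mod_cast hs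
    set M : ℝ := (N:ℝ) ^ (2/(s:ℝ)) with hM
    have hMpos : 0 < M := Real.rpow_pos_of_pos hNpos _
    have hM1 : 1 ≤ M := Real.one_le_rpow hN1 (by positivity)
    have hMs : M ^ s = (N:ℝ)^2 := by
      rw [hM, ← Real.rpow_natCast ((N:ℝ) ^ (2/(s:ℝ))) s, ← Real.rpow_mul hNpos.le,
        div_mul_cancel₀ _ hspos.ne', show (2:ℝ) = ((2:ℕ):ℝ) by norm_num,
        Real.rpow_natCast]
    have hMspos : 0 < M ^ s := pow_pos hMpos s
    have hlogM : Real.log M = (2/(s:ℝ)) * Real.log N := Real.log_rpow hNpos _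
    have hloglam_neg : Real.log (lam N) < 0 := Real.log_neg (hlampos N) hl1
    -- pointwise bound
    have hpt : ∀ ω, r N ω ≤ (Real.log M - Real.log (lam N))
        + (maxOver h N ω)^s / ((s:ℝ) * M^s) := by
      intro ω
      have hgnn' : 0 ≤ maxOver h N ω := hgnn N hN ω
      have hterm : 0 ≤ (maxOver h N ω)^s / ((s:ℝ) * M^s) := by positivity
      simp only [hr]
      split
      case isTrue hx =>
        have hgpos : 0 < maxOver h N ω := lt_of_lt_of_le (hlampos N) hx
        rw [Real.log_div hgpos.ne' (hlampos N).ne']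
        have hkey : Real.log (maxOver h N ω) ≤ Real.log M
            + (maxOver h N ω)^s / ((s:ℝ) * M^s) := by
          rcases le_or_gt (maxOver h N ω) M with hgM | hgM
          · have := Real.log_le_log hgpos hgM
            linarith
          · have hypos : 0 < maxOver h N ω / M := by positivity
            have h1 : Real.log ((maxOver h N ω / M)^s) ≤ (maxOver h N ω / M)^s := by
              have := Real.log_le_sub_one_of_pos (pow_pos hypos s)
              linarith
            rw [Real.log_pow] at h1
            have h2 : Real.log (maxOver h N ω / M)
                = Real.log (maxOver h N ω) - Real.log M :=
              Real.log_div hgpos.ne' hMpos.ne'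
            rw [h2] at h1
            have h3 : (maxOver h N ω / M)^s = (maxOver h N ω)^s / M^s := div_pow _ _ _
            rw [h3] at h1
            have h4 : Real.log (maxOver h N ω) - Real.log M
                ≤ (maxOver h N ω)^s / M^s / (s:ℝ) := by
              rw [le_div_iff₀ hspos]
              calc (Real.log (maxOver h N ω) - Real.log M) * (s:ℝ)
                  = (s:ℝ) * (Real.log (maxOver h N ω) - Real.log M) := mul_comm _ _
                _ ≤ (maxOver h N ω)^s / M^s := h1
            have h5 : (maxOver h N ω)^s / M^s / (s:ℝ)
                = (maxOver h N ω)^s / ((s:ℝ) * M^s) := by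
              rw [div_div]
              ring_nf
            rw [h5] at h4
            linarith
        linarith
      case isFalse hx =>
        have h0 : 0 ≤ Real.log M := Real.log_nonneg hM1
        linarith
    -- integrability
    have hgs_int : Integrable (fun ω => (maxOver h N ω)^s) μ := by
      apply Integrable.mono'
        (integrable_finset_sum _ (fun i (_ : i ∈ Finset.Icc 1 N) =>
          integrable_pow_h hmeas hnn hcdf hts i s hs))
        ((maxOver_measurable hmeas hN).pow_const s).aestronglyMeasurable
      filter_upwards with ω
      rw [Real.norm_eq_abs, abs_of_nonneg (pow_nonneg (hgnn N hN ω) s)]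
      exact hgleSum N hN s ω
    have hRHSint : Integrable (fun ω => (Real.log M - Real.log (lam N))
        + (maxOver h N ω)^s / ((s:ℝ) * M^s)) μ :=
      (integrable_const _).add (hgs_int.div_const _)
    have hle1 := integral_mono (hrint N hN) hRHSint hpt
    rw [integral_add (integrable_const _) (hgs_int.div_const _), integral_const,
      integral_div] at hle1
    simp only [measure_univ, ENNReal.toReal_one, probReal_univ, smul_eq_mul, one_mul] at hle1
    -- bound ∫ g^s
    have hm : 0 ≤ ∫ ω, h 1 ω ^ s ∂μ := integral_nonneg (fun ω : Ω => pow_nonneg (hnn 1 ω) s)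
    have hgs_bound : ∫ ω, (maxOver h N ω)^s ∂μ ≤ (N:ℝ) * ∫ ω, h 1 ω ^ s ∂μ := by
      calc ∫ ω, (maxOver h N ω)^s ∂μ
          ≤ ∫ ω, ∑ i ∈ Finset.Icc 1 N, h i ω ^ s ∂μ :=
            integral_mono hgs_int
              (integrable_finset_sum _ (fun i (_ : i ∈ Finset.Icc 1 N) =>
                integrable_pow_h hmeas hnn hcdf hts i s hs))
              (hgleSum N hN s)
        _ = ∑ i ∈ Finset.Icc 1 N, ∫ ω, h i ω ^ s ∂μ :=
            integral_finset_sum _ (fun i _ =>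
              integrable_pow_h hmeas hnn hcdf hts i s hs)
        _ = ∑ _i ∈ Finset.Icc 1 N, ∫ ω, h 1 ω ^ s ∂μ :=
            Finset.sum_congr rfl (fun i _ => integral_pow_eq hmeas hcdf i s)
        _ = (N:ℝ) * ∫ ω, h 1 ω ^ s ∂μ := by
            rw [Finset.sum_const, Nat.card_Icc]
            simp [mul_comm]
    have hfinal : (∫ ω, (maxOver h N ω)^s ∂μ) / ((s:ℝ) * M^s)
        ≤ (∫ ω, h 1 ω ^ s ∂μ) / ((s:ℝ)*(N:ℝ)) := by
      rw [hMs]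
      calc (∫ ω, (maxOver h N ω)^s ∂μ) / ((s:ℝ) * (N:ℝ)^2)
          ≤ ((N:ℝ) * ∫ ω, h 1 ω ^ s ∂μ) / ((s:ℝ) * (N:ℝ)^2) := by
            exact div_le_div_of_nonneg_right hgs_bound (by positivity)
          _ = (∫ ω, h 1 ω ^ s ∂μ) / ((s:ℝ)*(N:ℝ)) := by
            field_simp
    rw [hlogM] at hle1
    linarith
  -- final assembly
  rw [tendsto_order]
  constructor
  · intro a ha
    have h1 : Tendsto (fun N : ℕ => Real.log x0 / Real.log N) atTop (𝓝 0) :=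
      tendsto_const_nhds.div_atTop hlogN
    have h2 : Tendsto (fun N : ℕ =>
        (Real.log x0 - Real.log (lam N)) / Real.log N) atTop (𝓝 1) := by
      have h3 : Tendsto (fun N : ℕ =>
          Real.log x0 / Real.log N - Real.log (lam N) / Real.log N) atTop (𝓝 1) := by
        have := h1.sub hloglam
        simpa using this
      apply h3.congr
      intro N
      rw [div_sub_div_same]
    have hlowlim : Tendsto (fun N : ℕ =>
        (Real.log x0 - Real.log (lam N)) * q N / Real.log N) atTop (𝓝 1) := by
      have := h2.mul hqlim
      rw [mul_one] at this
      apply this.congr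
      intro N
      rw [div_mul_eq_mul_div]
    have hev1 := hlowlim.eventually (eventually_gt_nhds ha)
    filter_upwards [hev1, hRlow, eventually_ge_atTop 2] with N hgt hlow hN2
    have hlogpos : 0 < Real.log N := Real.log_pos (by exact_mod_cast hN2)
    calc a < (Real.log x0 - Real.log (lam N)) * q N / Real.log N := hgt
      _ ≤ (∫ ω, r N ω ∂μ) / Real.log N := div_le_div_of_nonneg_right hlow hlogpos.le
  · intro a ha
    set s : ℕ := ⌈4/(a-1)⌉₊ + 1 with hsdef
    have hs1 : 1 ≤ s := Nat.le_add_left 1 _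
    have hspos : (0:ℝ) < (s:ℝ) := by exact_mod_cast hs1
    have ha1 : (0:ℝ) < a - 1 := by linarith
    have h2s : (2:ℝ)/(s:ℝ) ≤ (a-1)/2 := by
      have hceil := Nat.le_ceil (4/(a-1))
      have hcast : ((⌈4/(a-1)⌉₊ : ℕ) : ℝ) ≤ (s:ℝ) := by
        exact_mod_cast Nat.le_succ _
      have h4 : 4/(a-1) ≤ (s:ℝ) := le_trans hceil hcast
      rw [div_le_div_iff₀ hspos (by norm_num : (0:ℝ) < 2)]
      rw [div_le_iff₀ ha1] at h4
      linarith
    set m : ℝ := ∫ ω, h 1 ω ^ s ∂μ with hmdef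
    have hm0 : Tendsto (fun N : ℕ => m/((s:ℝ)*(N:ℝ))) atTop (𝓝 0) :=
      tendsto_const_nhds.div_atTop (tendsto_natCast_atTop_atTop.const_mul_atTop hspos)
    have hm1 : Tendsto (fun N : ℕ => (m/((s:ℝ)*(N:ℝ)))/Real.log N) atTop (𝓝 0) :=
      hm0.div_atTop hlogN
    have hconst : Tendsto (fun N : ℕ =>
        2/(s:ℝ) + (m/((s:ℝ)*(N:ℝ)))/Real.log N - Real.log (lam N)/Real.log N)
        atTop (𝓝 (2/(s:ℝ) + 1)) := by
      have := ((tendsto_const_nhds (x := 2/(s:ℝ)) (f := atTop (α := ℕ))).add hm1).sub hloglam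
      simpa using this
    have hlt : 2/(s:ℝ) + 1 < a := by linarith
    have hev2 := hconst.eventually (eventually_lt_nhds hlt)
    filter_upwards [hev2, hRupper s hs1, eventually_ge_atTop 2] with N hval hup hN2
    have hlogpos : 0 < Real.log N := Real.log_pos (by exact_mod_cast hN2)
    calc (∫ ω, r N ω ∂μ) / Real.log N
        ≤ ((2/(s:ℝ)) * Real.log N + m/((s:ℝ)*(N:ℝ)) - Real.log (lam N)) / Real.log N :=
          div_le_div_of_nonneg_right hup hlogpos.le
      _ = 2/(s:ℝ) + (m/((s:ℝ)*(N:ℝ)))/Real.log N - Real.log (lam N)/Real.log N := by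
          rw [sub_div, add_div, mul_div_assoc, div_self hlogpos.ne', mul_one]
      _ < a := hval
end
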